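/- Let 1 < p < ∞ and let (X_n) be a sequence of nontrivial normed linear spaces. Then 𝒟(⊕_p X_n) = sup_n 𝒟(X_n), where 𝒟(Y) = sup{diam(J(y)) : y ∈ Y, y ≠ 0}. -/

import Mathlib

open scoped ENNReal

/-- The quantity 𝒟(X): the supremum over nonzero x of the diameter of the set of
norm-one support functionals of x. -/
noncomputable def scrD (X : Type*) [NormedAddCommGroup X] [NormedSpace ℝ X] : ℝ :=
  sSup ((fun x : X => Metric.diam {f : X →L[ℝ] ℝ | ‖f‖ = 1 ∧ f x = ‖x‖}) '' {x | x ≠ 0})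

section Aux

variable {X : Type*} [NormedAddCommGroup X] [NormedSpace ℝ X]

lemma Jset_bounded (x : X) :
    Bornology.IsBounded {f : X →L[ℝ] ℝ | ‖f‖ = 1 ∧ f x = ‖x‖} := by
  refine (Metric.isBounded_iff_subset_closedBall 0).2 ⟨1, fun f hf => ?_⟩
  simpa [Metric.mem_closedBall, dist_zero_right] using hf.1.le

lemma Jset_diam_le_two (x : X) :
    Metric.diam {f : X →L[ℝ] ℝ | ‖f‖ = 1 ∧ f x = ‖x‖} ≤ 2 := by
  refine Metric.diam_le_of_forall_dist_le (by norm_num) fun f hf g hg => ?_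
  calc dist f g ≤ ‖f‖ + ‖g‖ := dist_le_norm_add_norm f g
    _ = 2 := by rw [hf.1, hg.1]; norm_num

lemma scrD_bddAbove :
    BddAbove ((fun x : X => Metric.diam {f : X →L[ℝ] ℝ | ‖f‖ = 1 ∧ f x = ‖x‖}) '' {x | x ≠ 0}) := by
  refine ⟨2, ?_⟩
  rintro d ⟨x, -, rfl⟩
  exact Jset_diam_le_two x

lemma scrD_nonneg : 0 ≤ scrD X := by
  refine Real.sSup_nonneg ?_
  rintro d ⟨x, -, rfl⟩
  exact Metric.diam_nonneg

lemma scrD_le_two : scrD X ≤ 2 := by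
  refine Real.sSup_le ?_ (by norm_num)
  rintro d ⟨x, -, rfl⟩
  exact Jset_diam_le_two x

lemma diam_Jset_le_scrD {x : X} (hx : x ≠ 0) :
    Metric.diam {f : X →L[ℝ] ℝ | ‖f‖ = 1 ∧ f x = ‖x‖} ≤ scrD X :=
  le_csSup scrD_bddAbove ⟨x, hx, rfl⟩

/-- Equality case in Young's inequality. -/
lemma young_eq {p q a b : ℝ} (hpq : Real.HolderConjugate p q) (ha : 0 ≤ a) (hb : 0 ≤ b)
    (h : a * b = a ^ p / p + b ^ q / q) : b = a ^ (p - 1) := by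
  rcases ha.eq_or_lt with rfl | ha'
  · rw [Real.zero_rpow hpq.ne_zero, zero_mul, zero_div, zero_add] at h
    have hbq : b ^ q = 0 := by
      have h' := h.symm
      rw [div_eq_zero_iff] at h'
      rcases h' with h' | h'
      · exact h'
      · exact absurd h' hpq.symm.ne_zero
    have hb0 : b = 0 := ((Real.rpow_eq_zero_iff_of_nonneg hb).1 hbq).1
    rw [hb0, Real.zero_rpow hpq.sub_one_ne_zero]
  · rcases hb.eq_or_lt with rfl | hb'
    · exfalso
      rw [Real.zero_rpow hpq.symm.ne_zero, mul_zero, zero_div, add_zero] at h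
      have : a ^ p = 0 := by
        rw [eq_comm, div_eq_zero_iff] at h
        rcases h with h | h
        · exact h
        · exact absurd h hpq.ne_zero
      have := (Real.rpow_eq_zero_iff_of_nonneg ha'.le).1 this
      exact ha'.ne' this.1
    · -- both positive
      set x := p * Real.log a with hx
      set y := q * Real.log b with hysq
      have hexp_x : Real.exp x = a ^ p := by
        rw [Real.rpow_def_of_pos ha', mul_comm]
      have hexp_y : Real.exp y = b ^ q := by
        rw [Real.rpow_def_of_pos hb', mul_comm]
      by_cases hxy : x = y
      · -- p log a = q log b
        have hlog : Real.log b = (p / q) * Real.log a := by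
          rw [hx, hysq] at hxy
          field_simp [hpq.symm.ne_zero]
          linarith [hxy]
        have : b = a ^ (p / q) := by
          rw [Real.rpow_def_of_pos ha', mul_comm, ← hlog, Real.exp_log hb']
        rwa [hpq.div_conj_eq_sub_one] at this
      · exfalso
        have hconv := strictConvexOn_exp.2 (Set.mem_univ x) (Set.mem_univ y) hxy
          hpq.inv_pos hpq.symm.inv_pos hpq.inv_add_inv_eq_one
        rw [smul_eq_mul, smul_eq_mul, smul_eq_mul, smul_eq_mul] at hconv
        have h1 : p⁻¹ * x + q⁻¹ * y = Real.log a + Real.log b := by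
          rw [hx, hysq]
          field_simp [hpq.ne_zero, hpq.symm.ne_zero]
        have h2 : Real.exp (Real.log a + Real.log b) = a * b := by
          rw [Real.exp_add, Real.exp_log ha', Real.exp_log hb']
        rw [h1, h2, hexp_x, hexp_y] at hconv
        rw [h, div_eq_inv_mul, div_eq_inv_mul] at hconv
        exact lt_irrefl _ hconv

end Aux

section Lp

variable {E : ℕ → Type*} [∀ n, NormedAddCommGroup (E n)] [∀ n, NormedSpace ℝ (E n)]
variable {p : ℝ} [Fact (1 ≤ ENNReal.ofReal p)]

lemma single_norm (hp : 0 < p) (n : ℕ) (x : E n) :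
    ‖lp.single (ENNReal.ofReal p) n x‖ = ‖x‖ := by
  have h := lp.norm_single (p := ENNReal.ofReal p)
    (ENNReal.ofReal_pos.2 hp)
    n x
  simpa using h

lemma single_add (n : ℕ) (x y : E n) :
    lp.single (ENNReal.ofReal p) n (x + y) =
      lp.single (ENNReal.ofReal p) n x + lp.single (ENNReal.ofReal p) n y := by
  refine lp.ext (funext fun j => ?_)
  by_cases h : j = n
  · subst h
    simp [lp.coeFn_add, lp.single_apply_self]
  · simp [lp.coeFn_add, lp.single_apply_ne _ _ _ h]

/-- The composition of a functional on `lp E p` with the inclusion of the `n`-th summand. -/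
noncomputable def compSingle (hp : 1 < p) (f : lp E (ENNReal.ofReal p) →L[ℝ] ℝ) (n : ℕ) :
    E n →L[ℝ] ℝ :=
  LinearMap.mkContinuous
    { toFun := fun x => f (lp.single (ENNReal.ofReal p) n x)
      map_add' := fun x y => by
        show f (lp.single (ENNReal.ofReal p) n (x + y)) = _
        rw [single_add, map_add]
      map_smul' := fun c x => by
        show f (lp.single (ENNReal.ofReal p) n (c • x)) = _
        rw [lp.single_smul, map_smul]
        rfl }
    ‖f‖ fun x => by
      show ‖f (lp.single (ENNReal.ofReal p) n x)‖ ≤ ‖f‖ * ‖x‖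
      calc ‖f (lp.single (ENNReal.ofReal p) n x)‖
          ≤ ‖f‖ * ‖lp.single (ENNReal.ofReal p) n x‖ := f.le_opNorm _
        _ = ‖f‖ * ‖x‖ := by rw [single_norm (lt_trans one_pos hp) n x]

@[simp] lemma compSingle_apply (hp : 1 < p) (f : lp E (ENNReal.ofReal p) →L[ℝ] ℝ) (n : ℕ)
    (x : E n) : compSingle hp f n x = f (lp.single (ENNReal.ofReal p) n x) := rfl


/-- Evaluation at coordinate `n` as a continuous linear map on `lp E p`. -/
noncomputable def lpProj (hp : 1 < p) (n : ℕ) : lp E (ENNReal.ofReal p) →L[ℝ] E n :=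
  LinearMap.mkContinuous
    { toFun := fun z => z n
      map_add' := fun z w => by
        show (↑(z + w) : ∀ i, E i) n = _
        rw [lp.coeFn_add]
        rfl
      map_smul' := fun c z => by
        show (↑(c • z) : ∀ i, E i) n = _
        rw [lp.coeFn_smul]
        rfl }
    1 fun z => by
      show ‖(z : ∀ i, E i) n‖ ≤ 1 * ‖z‖
      rw [one_mul]
      exact lp.norm_apply_le_norm (ENNReal.ofReal_pos.2 (lt_trans one_pos hp)).ne' z n

@[simp] lemma lpProj_apply (hp : 1 < p) (n : ℕ) (z : lp E (ENNReal.ofReal p)) :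
    lpProj hp n z = z n := rfl

lemma norm_comp_lpProj (hp : 1 < p) (n : ℕ) (h : E n →L[ℝ] ℝ) :
    ‖h.comp (lpProj hp n)‖ = ‖h‖ := by
  refine le_antisymm ?_ ?_
  · calc ‖h.comp (lpProj hp n)‖ ≤ ‖h‖ * ‖lpProj (E := E) hp n‖ :=
        ContinuousLinearMap.opNorm_comp_le _ _
      _ ≤ ‖h‖ * 1 := by
        refine mul_le_mul_of_nonneg_left ?_ (norm_nonneg _)
        exact LinearMap.mkContinuous_norm_le _ zero_le_one _
      _ = ‖h‖ := mul_one _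
  · refine h.opNorm_le_bound (norm_nonneg _) fun x => ?_
    have : h x = (h.comp (lpProj hp n)) (lp.single (ENNReal.ofReal p) n x) := by
      simp [lp.single_apply_self]
    rw [this]
    calc ‖(h.comp (lpProj hp n)) (lp.single (ENNReal.ofReal p) n x)‖
        ≤ ‖h.comp (lpProj hp n)‖ * ‖lp.single (ENNReal.ofReal p) n x‖ :=
        ContinuousLinearMap.le_opNorm _ _
      _ = ‖h.comp (lpProj hp n)‖ * ‖x‖ := by rw [single_norm (lt_trans one_pos hp) n x]

lemma scrD_component_le (hp : 1 < p) (n : ℕ) :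
    scrD (E n) ≤ scrD (lp E (ENNReal.ofReal p)) := by
  have hp0 : (0:ℝ) < p := lt_trans one_pos hp
  refine Real.sSup_le ?_ scrD_nonneg
  rintro d ⟨x, hx, rfl⟩
  have hx : x ≠ 0 := hx
  have hsx : lp.single (ENNReal.ofReal p) n x ≠ 0 := by
    intro hcon
    apply hx
    have := congrArg (fun z => ‖z‖) hcon
    simp only [norm_zero] at this
    rw [single_norm hp0 n x] at this
    exact norm_eq_zero.1 this
  have hmem : ∀ h : E n →L[ℝ] ℝ, (‖h‖ = 1 ∧ h x = ‖x‖) →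
      ‖h.comp (lpProj hp n)‖ = 1 ∧
        (h.comp (lpProj hp n)) (lp.single (ENNReal.ofReal p) n x)
          = ‖lp.single (ENNReal.ofReal p) n x‖ := by
    intro h hh
    refine ⟨by rw [norm_comp_lpProj hp n h, hh.1], ?_⟩
    rw [single_norm hp0 n x]
    simpa [lp.single_apply_self] using hh.2
  have hdiam : Metric.diam {h : E n →L[ℝ] ℝ | ‖h‖ = 1 ∧ h x = ‖x‖}
      ≤ Metric.diam {F : lp E (ENNReal.ofReal p) →L[ℝ] ℝ | ‖F‖ = 1 ∧
          F (lp.single (ENNReal.ofReal p) n x) = ‖lp.single (ENNReal.ofReal p) n x‖} := by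
    refine Metric.diam_le_of_forall_dist_le Metric.diam_nonneg fun h hh h' hh' => ?_
    have hdist : dist h h' = dist (h.comp (lpProj hp n)) (h'.comp (lpProj hp n)) := by
      rw [dist_eq_norm, dist_eq_norm, ← ContinuousLinearMap.sub_comp,
        norm_comp_lpProj hp n (h - h')]
    rw [hdist]
    exact Metric.dist_le_diam_of_mem (Jset_bounded _) (hmem h hh) (hmem h' hh')
  exact hdiam.trans (diam_Jset_le_scrD hsx)


lemma finite_dual_bound (hp : 1 < p) (f : lp E (ENNReal.ofReal p) →L[ℝ] ℝ)
    (hf1 : ‖f‖ ≤ 1) (s : Finset ℕ) :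
    ∑ n ∈ s, ‖compSingle hp f n‖ ^ (Real.conjExponent p) ≤ 1 := by
  classical
  have hp0 : (0:ℝ) < p := lt_trans one_pos hp
  have hpq : p.HolderConjugate (Real.conjExponent p) := Real.HolderConjugate.conjExponent hp
  set q : ℝ := Real.conjExponent p with hqdef
  set b : ℕ → ℝ := fun n => ‖compSingle hp f n‖ with hbdef
  have hb0 : ∀ n, 0 ≤ b n := fun n => norm_nonneg _
  set t : ℝ := ∑ n ∈ s, b n ^ q with htdef
  have ht0 : 0 ≤ t := Finset.sum_nonneg fun n _ => Real.rpow_nonneg (hb0 n) q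
  show t ≤ 1
  rcases ht0.eq_or_lt with ht | ht
  · rw [← ht]; norm_num
  -- t > 0
  set c : ℕ → ℝ := fun n => b n ^ (q - 1) / t ^ (1/p) with hcdef
  have hc0 : ∀ n, 0 ≤ c n := fun n =>
    div_nonneg (Real.rpow_nonneg (hb0 n) _) (Real.rpow_nonneg ht0 _)
  have hbq1 : ∀ n, b n ^ (q - 1) * b n = b n ^ q := by
    intro n
    rcases eq_or_ne (b n) 0 with h | h
    · rw [h, Real.zero_rpow hpq.symm.ne_zero, Real.zero_rpow hpq.symm.sub_one_ne_zero, zero_mul]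
    · rw [← Real.rpow_add_one h (q - 1), sub_add_cancel]
  have hcp : ∀ n, c n ^ p = b n ^ q / t := by
    intro n
    rw [hcdef]
    simp only []
    rw [Real.div_rpow (Real.rpow_nonneg (hb0 n) _) (Real.rpow_nonneg ht0 _),
      ← Real.rpow_mul (hb0 n), hpq.symm.sub_one_mul_conj, ← Real.rpow_mul ht0,
      one_div_mul_cancel hp0.ne', Real.rpow_one]
  have hsum_cp : ∑ n ∈ s, c n ^ p = 1 := by
    rw [Finset.sum_congr rfl fun n _ => hcp n, ← Finset.sum_div, ← htdef, div_self ht.ne']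
  have hsum_cb : ∑ n ∈ s, c n * b n = t ^ (1/q) := by
    have : ∀ n, c n * b n = b n ^ q / t ^ (1/p) := by
      intro n
      rw [hcdef]
      simp only []
      rw [div_mul_eq_mul_div, hbq1 n]
    rw [Finset.sum_congr rfl fun n _ => this n, ← Finset.sum_div, ← htdef]
    rw [div_eq_iff (Real.rpow_pos_of_pos ht _).ne', ← Real.rpow_add ht]
    have : 1/q + 1/p = 1 := by
      have := hpq.inv_add_inv_eq_one
      rw [inv_eq_one_div, inv_eq_one_div] at this
      linarith
    rw [this, Real.rpow_one]
  -- main estimate: for every ε > 0, t ^ (1/q) ≤ 1 + ε * ∑ c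
  have hmain : ∀ ε : ℝ, 0 < ε → t ^ (1/q) ≤ 1 + ε * ∑ n ∈ s, c n := by
    intro ε hε
    -- choose near-norming vectors
    have hexists : ∀ n : ℕ, ∃ u : E n, ‖u‖ ≤ 1 ∧ b n - ε ≤ compSingle hp f n u := by
      intro n
      by_cases hbe : b n ≤ ε
      · refine ⟨0, by simp, ?_⟩
        rw [map_zero]
        linarith
      · push_neg at hbe
        have hlt : b n - ε < ‖compSingle hp f n‖ := sub_lt_self _ hε
        obtain ⟨x, hx1, hx2⟩ := (compSingle hp f n).exists_lt_apply_of_lt_opNorm hlt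
        rcases le_or_gt 0 (compSingle hp f n x) with hs0 | hs0
        · refine ⟨x, hx1.le, ?_⟩
          rw [Real.norm_eq_abs, abs_of_nonneg hs0] at hx2
          linarith
        · refine ⟨-x, by simpa using hx1.le, ?_⟩
          rw [Real.norm_eq_abs, abs_of_neg hs0] at hx2
          rw [map_neg]
          linarith
    choose u hu1 hu2 using hexists
    set z : lp E (ENNReal.ofReal p) := ∑ n ∈ s, lp.single (ENNReal.ofReal p) n (c n • u n)
      with hzdef
    have htr : (ENNReal.ofReal p).toReal = p := ENNReal.toReal_ofReal hp0.le
    have hptr : 0 < (ENNReal.ofReal p).toReal := by rw [htr]; exact hp0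
    have hznorm_p : ‖z‖ ^ p = ∑ n ∈ s, ‖c n • u n‖ ^ p := by
      have := lp.norm_sum_single (p := ENNReal.ofReal p) hptr (fun i => c i • u i) s
      rw [htr] at this
      exact this
    have hznorm_le : ‖z‖ ^ p ≤ 1 := by
      rw [hznorm_p, ← hsum_cp]
      refine Finset.sum_le_sum fun n _ => ?_
      refine Real.rpow_le_rpow (norm_nonneg _) ?_ hp0.le
      rw [norm_smul, Real.norm_eq_abs, abs_of_nonneg (hc0 n)]
      calc c n * ‖u n‖ ≤ c n * 1 := mul_le_mul_of_nonneg_left (hu1 n) (hc0 n)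
        _ = c n := mul_one _
    have hz1 : ‖z‖ ≤ 1 := by
      have h := Real.rpow_le_rpow (Real.rpow_nonneg (norm_nonneg z) p) hznorm_le
        (by positivity : (0:ℝ) ≤ p⁻¹)
      rwa [← Real.rpow_mul (norm_nonneg z), mul_inv_cancel₀ hp0.ne', Real.rpow_one,
        Real.one_rpow] at h
    have hfz_le : f z ≤ 1 := by
      calc f z ≤ |f z| := le_abs_self _
        _ = ‖f z‖ := (Real.norm_eq_abs _).symm
        _ ≤ ‖f‖ * ‖z‖ := f.le_opNorm z
        _ ≤ 1 * 1 := mul_le_mul hf1 hz1 (norm_nonneg _) zero_le_one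
        _ = 1 := one_mul _
    have hfz_eq : f z = ∑ n ∈ s, c n * compSingle hp f n (u n) := by
      rw [hzdef, map_sum]
      refine Finset.sum_congr rfl fun n _ => ?_
      rw [lp.single_smul, map_smul, smul_eq_mul, compSingle_apply]
    have hlow : ∑ n ∈ s, c n * (b n - ε) ≤ f z := by
      rw [hfz_eq]
      refine Finset.sum_le_sum fun n _ => ?_
      exact mul_le_mul_of_nonneg_left (hu2 n) (hc0 n)
    have hexpand : ∑ n ∈ s, c n * (b n - ε)
        = ∑ n ∈ s, c n * b n - ε * ∑ n ∈ s, c n := by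
      rw [Finset.mul_sum, ← Finset.sum_sub_distrib]
      refine Finset.sum_congr rfl fun n _ => by ring
    rw [hexpand, hsum_cb] at hlow
    linarith [hlow.trans hfz_le]
  have hC0 : 0 ≤ ∑ n ∈ s, c n := Finset.sum_nonneg fun n _ => hc0 n
  have htq : t ^ (1/q) ≤ 1 := by
    refine le_of_forall_pos_le_add fun ε' hε' => ?_
    have h := hmain (ε' / (∑ n ∈ s, c n + 1)) (by positivity)
    have : (ε' / (∑ n ∈ s, c n + 1)) * ∑ n ∈ s, c n ≤ ε' := by
      rw [div_mul_eq_mul_div, div_le_iff₀ (by positivity)]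
      nlinarith
    linarith
  have := Real.rpow_le_rpow (Real.rpow_nonneg ht0 _) htq (le_of_lt hpq.symm.pos)
  rwa [← Real.rpow_mul ht0, one_div_mul_cancel hpq.symm.ne_zero, Real.rpow_one,
    Real.one_rpow] at this


lemma component_eq (hp : 1 < p) (y : lp E (ENNReal.ofReal p)) (hy : ‖y‖ = 1)
    (f : lp E (ENNReal.ofReal p) →L[ℝ] ℝ) (hf1 : ‖f‖ = 1) (hfy : f y = 1) :
    ∀ n, ‖compSingle hp f n‖ = ‖y n‖ ^ (p - 1) ∧
      compSingle hp f n (y n) = ‖y n‖ ^ (p - 1) * ‖y n‖ := by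
  have hp0 : (0:ℝ) < p := lt_trans one_pos hp
  have hpq : p.HolderConjugate (Real.conjExponent p) := Real.HolderConjugate.conjExponent hp
  set q : ℝ := Real.conjExponent p with hqdef
  set b : ℕ → ℝ := fun n => ‖compSingle hp f n‖ with hbdef
  have hb0 : ∀ n, 0 ≤ b n := fun n => norm_nonneg _
  set a : ℕ → ℝ := fun n => ‖y n‖ with hadef
  have ha0 : ∀ n, 0 ≤ a n := fun n => norm_nonneg _
  have htr : (ENNReal.ofReal p).toReal = p := ENNReal.toReal_ofReal hp0.le
  have hptr : 0 < (ENNReal.ofReal p).toReal := by rw [htr]; exact hp0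
  have hPtop : (ENNReal.ofReal p) ≠ ⊤ := ENNReal.ofReal_ne_top
  -- sum of a^p is 1
  have hsa : HasSum (fun n => a n ^ p) 1 := by
    have := lp.hasSum_norm hptr y
    rw [htr, hy, Real.one_rpow] at this
    exact this
  -- b^q is summable with sum at most 1
  have hsb : Summable (fun n => b n ^ q) :=
    summable_of_sum_le (fun n => Real.rpow_nonneg (hb0 n) q)
      (finite_dual_bound hp f hf1.le)
  have hsb_le : ∑' n, b n ^ q ≤ 1 :=
    Summable.tsum_le_of_sum_le hsb (finite_dual_bound hp f hf1.le)
  -- componentwise decomposition of f y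
  have hfy_sum : HasSum (fun n => compSingle hp f n (y n)) 1 := by
    have h0 := (lp.hasSum_single hPtop y).mapL f
    rw [hfy] at h0
    exact h0
  -- Hölder
  have hba := Real.summable_and_inner_le_Lp_mul_Lq_tsum_of_nonneg hpq.symm hb0 ha0 hsb hsa.summable
  have hba_sum : Summable (fun n => b n * a n) := hba.1
  have hba_le : ∑' n, b n * a n ≤ 1 := by
    refine hba.2.trans ?_
    have h1 : (∑' n, b n ^ q) ^ (1/q) ≤ 1 := by
      calc (∑' n, b n ^ q) ^ (1/q) ≤ 1 ^ (1/q) :=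
          Real.rpow_le_rpow (tsum_nonneg fun n => Real.rpow_nonneg (hb0 n) q) hsb_le
            hpq.symm.one_div_nonneg
        _ = 1 := Real.one_rpow _
    have h2 : (∑' n, a n ^ p) ^ (1/p) = 1 := by rw [hsa.tsum_eq, Real.one_rpow]
    calc (∑' n, b n ^ q) ^ (1/q) * (∑' n, a n ^ p) ^ (1/p)
        ≤ 1 * 1 := by
          rw [h2]
          exact mul_le_mul_of_nonneg_right h1 zero_le_one
      _ = 1 := one_mul _
  have hterm : ∀ n, compSingle hp f n (y n) ≤ b n * a n := fun n =>
    (le_abs_self _).trans (by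
      rw [← Real.norm_eq_abs]
      exact (compSingle hp f n).le_opNorm (y n))
  have h1le : (1:ℝ) ≤ ∑' n, b n * a n := by
    rw [← hfy_sum.tsum_eq]
    exact Summable.tsum_le_tsum hterm hfy_sum.summable hba_sum
  have hba_eq : ∑' n, b n * a n = 1 := le_antisymm hba_le h1le
  -- termwise equality f_n(y_n) = b_n a_n
  have htermeq : ∀ n, compSingle hp f n (y n) = b n * a n := by
    intro n
    by_contra hne
    have hlt : compSingle hp f n (y n) < b n * a n := lt_of_le_of_ne (hterm n) hne
    have : (1:ℝ) < 1 := by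
      calc (1:ℝ) = ∑' n, compSingle hp f n (y n) := hfy_sum.tsum_eq.symm
        _ < ∑' n, b n * a n :=
          Summable.tsum_lt_tsum hterm hlt hfy_sum.summable hba_sum
        _ = 1 := hba_eq
    exact lt_irrefl _ this
  -- Young
  have hyoung : ∀ n, b n * a n ≤ a n ^ p / p + b n ^ q / q := fun n => by
    rw [mul_comm]
    exact Real.young_inequality_of_nonneg (ha0 n) (hb0 n) hpq
  have hrhs_sum : Summable (fun n => a n ^ p / p + b n ^ q / q) :=
    (hsa.summable.div_const p).add (hsb.div_const q)
  have hrhs_tsum : ∑' n, (a n ^ p / p + b n ^ q / q) = 1/p + (∑' n, b n ^ q) / q := by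
    rw [Summable.tsum_add (hsa.summable.div_const p) (hsb.div_const q), tsum_div_const,
      tsum_div_const, hsa.tsum_eq]
  have h1le' : (1:ℝ) ≤ 1/p + (∑' n, b n ^ q) / q := by
    rw [← hrhs_tsum, ← hba_eq]
    exact Summable.tsum_le_tsum hyoung hba_sum hrhs_sum
  have hbq_eq : ∑' n, b n ^ q = 1 := by
    have hq1 : 1/p + 1/q = 1 := by
      have := hpq.inv_add_inv_eq_one
      rw [inv_eq_one_div, inv_eq_one_div] at this
      linarith
    have : (1:ℝ) - 1/p ≤ (∑' n, b n ^ q) / q := by linarith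
    have h2 : (1:ℝ)/q ≤ (∑' n, b n ^ q) / q := by linarith
    have h3 : (1:ℝ) ≤ ∑' n, b n ^ q := by
      have hqpos := hpq.symm.pos
      exact (div_le_div_iff_of_pos_right hqpos).1 h2
    exact le_antisymm hsb_le h3
  have hrhs_tsum1 : ∑' n, (a n ^ p / p + b n ^ q / q) = 1 := by
    rw [hrhs_tsum, hbq_eq]
    have := hpq.inv_add_inv_eq_one
    rw [inv_eq_one_div, inv_eq_one_div] at this
    linarith
  -- termwise Young equality
  have hyoungeq : ∀ n, b n * a n = a n ^ p / p + b n ^ q / q := by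
    intro n
    by_contra hne
    have hlt : b n * a n < a n ^ p / p + b n ^ q / q := lt_of_le_of_ne (hyoung n) hne
    have : (1:ℝ) < 1 := by
      calc (1:ℝ) = ∑' n, b n * a n := hba_eq.symm
        _ < ∑' n, (a n ^ p / p + b n ^ q / q) := Summable.tsum_lt_tsum hyoung hlt hba_sum hrhs_sum
        _ = 1 := hrhs_tsum1
    exact lt_irrefl _ this
  intro n
  have hbn : b n = a n ^ (p - 1) := by
    refine young_eq hpq (ha0 n) (hb0 n) ?_
    rw [mul_comm]
    exact hyoungeq n
  exact ⟨hbn, by rw [htermeq n, hbn]⟩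


lemma key_dist (hp : 1 < p) [∀ n, Nontrivial (E n)]
    (y : lp E (ENNReal.ofReal p)) (hy : ‖y‖ = 1)
    (f g : lp E (ENNReal.ofReal p) →L[ℝ] ℝ)
    (hf : ‖f‖ = 1 ∧ f y = ‖y‖) (hg : ‖g‖ = 1 ∧ g y = ‖y‖) :
    dist f g ≤ ⨆ n, scrD (E n) := by
  have hp0 : (0:ℝ) < p := lt_trans one_pos hp
  have hpq : p.HolderConjugate (Real.conjExponent p) := Real.HolderConjugate.conjExponent hp
  set q : ℝ := Real.conjExponent p with hqdef
  set D : ℝ := ⨆ n, scrD (E n) with hD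
  have hD0 : 0 ≤ D := Real.iSup_nonneg fun n => scrD_nonneg
  have hbdd : BddAbove (Set.range fun n => scrD (E n)) := by
    refine ⟨2, ?_⟩
    rintro _ ⟨m, rfl⟩
    exact scrD_le_two
  have hDle : ∀ n, scrD (E n) ≤ D := fun n => le_ciSup hbdd n
  have htr : (ENNReal.ofReal p).toReal = p := ENNReal.toReal_ofReal hp0.le
  have hptr : 0 < (ENNReal.ofReal p).toReal := by rw [htr]; exact hp0
  have hPtop : (ENNReal.ofReal p) ≠ ⊤ := ENNReal.ofReal_ne_top
  have hfc := component_eq hp y hy f hf.1 (by rw [hf.2, hy])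
  have hgc := component_eq hp y hy g hg.1 (by rw [hg.2, hy])
  have hp1 : p - 1 ≠ 0 := sub_ne_zero_of_ne (ne_of_gt hp)
  have hcomp : ∀ n, ‖compSingle hp f n - compSingle hp g n‖ ≤ D * ‖y n‖ ^ (p - 1) := by
    intro n
    rcases eq_or_ne (‖y n‖) 0 with ha | ha
    · have hz : (‖y n‖:ℝ) ^ (p-1) = 0 := by rw [ha, Real.zero_rpow hp1]
      have hf0 : compSingle hp f n = 0 := norm_eq_zero.1 (by rw [(hfc n).1, hz])
      have hg0 : compSingle hp g n = 0 := norm_eq_zero.1 (by rw [(hgc n).1, hz])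
      rw [hf0, hg0, sub_zero, norm_zero, hz, mul_zero]
    · have hpos : 0 < ‖y n‖ := lt_of_le_of_ne (norm_nonneg _) (Ne.symm ha)
      have hyn : (y : ∀ i, E i) n ≠ 0 := norm_pos_iff.1 hpos
      set β : ℝ := ‖y n‖ ^ (p - 1) with hβdef
      have hβ : 0 < β := Real.rpow_pos_of_pos hpos _
      set F : E n →L[ℝ] ℝ := β⁻¹ • compSingle hp f n with hFdef
      set G : E n →L[ℝ] ℝ := β⁻¹ • compSingle hp g n with hGdef
      have hmemF : ‖F‖ = 1 ∧ F ((y : ∀ i, E i) n) = ‖(y : ∀ i, E i) n‖ := by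
        constructor
        · have hns := norm_smul (β⁻¹) (compSingle hp f n)
          rw [hFdef, hns, Real.norm_eq_abs, abs_of_pos (inv_pos.2 hβ), (hfc n).1,
            ← hβdef, inv_mul_cancel₀ hβ.ne']
        · rw [hFdef, ContinuousLinearMap.smul_apply, (hfc n).2, ← hβdef, smul_eq_mul,
            ← mul_assoc, inv_mul_cancel₀ hβ.ne', one_mul]
      have hmemG : ‖G‖ = 1 ∧ G ((y : ∀ i, E i) n) = ‖(y : ∀ i, E i) n‖ := by
        constructor
        · have hns := norm_smul (β⁻¹) (compSingle hp g n)
          rw [hGdef, hns, Real.norm_eq_abs, abs_of_pos (inv_pos.2 hβ), (hgc n).1,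
            ← hβdef, inv_mul_cancel₀ hβ.ne']
        · rw [hGdef, ContinuousLinearMap.smul_apply, (hgc n).2, ← hβdef, smul_eq_mul,
            ← mul_assoc, inv_mul_cancel₀ hβ.ne', one_mul]
      have hdistFG : dist F G ≤ D :=
        ((Metric.dist_le_diam_of_mem (Jset_bounded _) hmemF hmemG).trans
          (diam_Jset_le_scrD hyn)).trans (hDle n)
      have hrw : compSingle hp f n - compSingle hp g n = β • (F - G) := by
        rw [smul_sub, hFdef, hGdef, smul_inv_smul₀ hβ.ne', smul_inv_smul₀ hβ.ne']
      have hns := norm_smul β (F - G)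
      rw [hrw, hns, Real.norm_eq_abs, abs_of_pos hβ, ← dist_eq_norm, mul_comm]
      exact mul_le_mul_of_nonneg_right hdistFG hβ.le
  rw [dist_eq_norm]
  refine ContinuousLinearMap.opNorm_le_bound _ hD0 fun z => ?_
  have hzsum : HasSum (fun n => (compSingle hp f n - compSingle hp g n) ((z : ∀ i, E i) n))
      ((f - g) z) := by
    have h0 := (lp.hasSum_single hPtop z).mapL (f - g)
    simpa using h0
  have hz_p : HasSum (fun n => ‖(z : ∀ i, E i) n‖ ^ p) (‖z‖ ^ p) := by
    have := lp.hasSum_norm hptr z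
    rwa [htr] at this
  have hsa : HasSum (fun n => ‖(y : ∀ i, E i) n‖ ^ p) 1 := by
    have := lp.hasSum_norm hptr y
    rwa [htr, hy, Real.one_rpow] at this
  have hexp : (fun n => (‖(y : ∀ i, E i) n‖ ^ (p-1)) ^ q) = fun n => ‖(y : ∀ i, E i) n‖ ^ p := by
    funext n
    rw [← Real.rpow_mul (norm_nonneg _), hpq.sub_one_mul_conj]
  have hsum_yq : Summable (fun n => (‖(y : ∀ i, E i) n‖ ^ (p-1)) ^ q) := by
    rw [hexp]; exact hsa.summable
  have hsum_ay : Summable (fun n => ‖(y : ∀ i, E i) n‖ ^ (p-1) * ‖(z : ∀ i, E i) n‖) :=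
    Real.summable_mul_of_Lp_Lq_of_nonneg hpq.symm
      (fun n => Real.rpow_nonneg (norm_nonneg _) _) (fun n => norm_nonneg _)
      hsum_yq hz_p.summable
  have hbound : ∀ n, ‖(compSingle hp f n - compSingle hp g n) ((z : ∀ i, E i) n)‖
      ≤ D * (‖(y : ∀ i, E i) n‖ ^ (p-1) * ‖(z : ∀ i, E i) n‖) := by
    intro n
    calc ‖(compSingle hp f n - compSingle hp g n) ((z : ∀ i, E i) n)‖
        ≤ ‖compSingle hp f n - compSingle hp g n‖ * ‖(z : ∀ i, E i) n‖ :=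
        ContinuousLinearMap.le_opNorm _ _
      _ ≤ (D * ‖(y : ∀ i, E i) n‖ ^ (p-1)) * ‖(z : ∀ i, E i) n‖ :=
        mul_le_mul_of_nonneg_right (hcomp n) (norm_nonneg _)
      _ = D * (‖(y : ∀ i, E i) n‖ ^ (p-1) * ‖(z : ∀ i, E i) n‖) := by ring
  have hsumv : Summable (fun n => D * (‖(y : ∀ i, E i) n‖ ^ (p-1) * ‖(z : ∀ i, E i) n‖)) :=
    hsum_ay.mul_left D
  have hnorm_sum : Summable
      (fun n => ‖(compSingle hp f n - compSingle hp g n) ((z : ∀ i, E i) n)‖) :=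
    hsumv.of_nonneg_of_le (fun n => norm_nonneg _) hbound
  calc ‖(f - g) z‖
      = ‖∑' n, (compSingle hp f n - compSingle hp g n) ((z : ∀ i, E i) n)‖ := by
        rw [hzsum.tsum_eq]
    _ ≤ ∑' n, ‖(compSingle hp f n - compSingle hp g n) ((z : ∀ i, E i) n)‖ :=
        norm_tsum_le_tsum_norm hnorm_sum
    _ ≤ ∑' n, D * (‖(y : ∀ i, E i) n‖ ^ (p-1) * ‖(z : ∀ i, E i) n‖) :=
        Summable.tsum_le_tsum hbound hnorm_sum hsumv
    _ = D * ∑' n, ‖(y : ∀ i, E i) n‖ ^ (p-1) * ‖(z : ∀ i, E i) n‖ := tsum_mul_left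
    _ ≤ D * ((∑' n, (‖(y : ∀ i, E i) n‖ ^ (p-1)) ^ q) ^ (1/q)
        * (∑' n, ‖(z : ∀ i, E i) n‖ ^ p) ^ (1/p)) :=
        mul_le_mul_of_nonneg_left
          (Real.inner_le_Lp_mul_Lq_tsum_of_nonneg hpq.symm
            (fun n => Real.rpow_nonneg (norm_nonneg _) _) (fun n => norm_nonneg _)
            hsum_yq hz_p.summable) hD0
    _ = D * ‖z‖ := by
        rw [hexp, hsa.tsum_eq, Real.one_rpow, one_mul, hz_p.tsum_eq,
          ← Real.rpow_mul (norm_nonneg z), mul_one_div_cancel hp0.ne', Real.rpow_one]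

lemma diam_J_le (hp : 1 < p) [∀ n, Nontrivial (E n)] (y : lp E (ENNReal.ofReal p))
    (hy : y ≠ 0) :
    Metric.diam {f : lp E (ENNReal.ofReal p) →L[ℝ] ℝ | ‖f‖ = 1 ∧ f y = ‖y‖}
      ≤ ⨆ n, scrD (E n) := by
  have hy0 : (0:ℝ) < ‖y‖ := norm_pos_iff.2 hy
  set u : lp E (ENNReal.ofReal p) := ‖y‖⁻¹ • y with hu
  have hunorm : ‖u‖ = 1 := by
    rw [hu, norm_smul, norm_inv, norm_norm, inv_mul_cancel₀ hy0.ne']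
  have hset : {f : lp E (ENNReal.ofReal p) →L[ℝ] ℝ | ‖f‖ = 1 ∧ f y = ‖y‖}
      = {f | ‖f‖ = 1 ∧ f u = ‖u‖} := by
    ext f
    simp only [Set.mem_setOf_eq, hunorm]
    constructor
    · rintro ⟨h1, h2⟩
      refine ⟨h1, ?_⟩
      rw [hu, map_smul, smul_eq_mul, h2, inv_mul_cancel₀ hy0.ne']
    · rintro ⟨h1, h2⟩
      refine ⟨h1, ?_⟩
      rw [hu, map_smul, smul_eq_mul] at h2
      field_simp at h2
      linarith
  rw [hset]
  refine Metric.diam_le_of_forall_dist_le (Real.iSup_nonneg fun n => scrD_nonneg)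
    fun f hf g hg => ?_
  exact key_dist hp u hunorm f g hf hg

end Lp

/-- For 1 < p < ∞ and a sequence of nontrivial normed spaces E_n,
`𝒟(⊕_p E_n) = sup_n 𝒟(E_n)`. -/
theorem stmt9 (E : ℕ → Type*) [∀ n, NormedAddCommGroup (E n)]
    [∀ n, NormedSpace ℝ (E n)] [∀ n, Nontrivial (E n)]
    (p : ℝ) (hp : 1 < p) [Fact (1 ≤ ENNReal.ofReal p)] :
    scrD (lp E (ENNReal.ofReal p)) = ⨆ n, scrD (E n) := by
  refine le_antisymm ?_ ?_
  · refine Real.sSup_le ?_ (Real.iSup_nonneg fun n => scrD_nonneg)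
    rintro d ⟨y, hy, rfl⟩
    exact diam_J_le hp y hy
  · exact ciSup_le fun n => scrD_component_le hp n
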